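/- Let F and G be sub-σ-fields of F on a probability space (Ω, F, P), and let ψ ≥ 0 be such that |P(A | F) − P(A)| ≤ ψ P(A) almost surely for every A ∈ G. If X is G-measurable, Y is F-measurable, E|X| < ∞, E|Y| < ∞, and XY is integrable, then |E[XY] − E[X] E[Y]| ≤ ψ · E|X| · E|Y|. Moreover, if additionally E X² < ∞ and E Y² < ∞, then |E[XY] − E[X] E[Y]| ≤ ψ (E X²)^{1/2} (E Y²)^{1/2}. -/

import Mathlib

open MeasureTheory

lemma psiMix_simpleFunc_rep {Ω : Type*} {m : MeasurableSpace Ω}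
    (f : @SimpleFunc Ω m ℝ) (g : ℝ → ℝ) (ω : Ω) :
    ∑ x ∈ f.range, g x * (f ⁻¹' {x}).indicator (fun _ => (1 : ℝ)) ω = g (f ω) := by
  rw [Finset.sum_eq_single (f ω)]
  · simp [Set.indicator_apply]
  · intro b _ hb
    have : ¬ f ω = b := fun h => hb h.symm
    simp [Set.indicator_apply, Set.mem_preimage, this]
  · intro h
    exact absurd (f.mem_range_self ω) h

lemma psiMix_ind_int {Ω : Type*} [m0 : MeasurableSpace Ω] {P : Measure Ω}
    {Y : Ω → ℝ} (hYi : Integrable Y P) {A : Set Ω} (hA : MeasurableSet A) :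
    Integrable (fun ω => A.indicator (fun _ => (1 : ℝ)) ω * Y ω) P := by
  have hind_eq : (fun ω => A.indicator (fun _ => (1 : ℝ)) ω * Y ω) = A.indicator Y := by
    funext ω; by_cases hω : ω ∈ A <;> simp [Set.indicator_apply, hω]
  rw [hind_eq]; exact hYi.indicator hA

lemma psiMix_int_ind_const {Ω : Type*} [m0 : MeasurableSpace Ω] {P : Measure Ω}
    {A : Set Ω} (hA : MeasurableSet A) :
    (∫ ω, A.indicator (fun _ => (1 : ℝ)) ω ∂P) = (P A).toReal := by
  simpa [measureReal_def] using integral_indicator_const (μ := P) (1 : ℝ) hA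

lemma psiMix_indicator {Ω : Type*} [m0 : MeasurableSpace Ω] (P : Measure Ω)
    [IsProbabilityMeasure P] (𝔽 : MeasurableSpace Ω) (h𝔽 : 𝔽 ≤ m0) (ψ : ℝ)
    {Y : Ω → ℝ} (hY : Measurable[𝔽] Y) (hYi : Integrable Y P)
    {A : Set Ω} (hA : MeasurableSet[m0] A)
    (hbd : ∀ᵐ ω ∂P,
      |(P[A.indicator (fun _ => (1 : ℝ))|𝔽]) ω - (P A).toReal| ≤ ψ * (P A).toReal) :
    |(∫ ω, A.indicator (fun _ => (1 : ℝ)) ω * Y ω ∂P) - (P A).toReal * ∫ ω, Y ω ∂P|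
      ≤ ψ * (P A).toReal * ∫ ω, |Y ω| ∂P := by
  set c : ℝ := (P A).toReal with hc
  set g : Ω → ℝ := P[A.indicator (fun _ => (1 : ℝ))|𝔽] with hg
  have hYm0 : Measurable[m0] Y := hY.mono h𝔽 le_rfl
  have h1i : Integrable (A.indicator (fun _ => (1 : ℝ))) P := by
    have := psiMix_ind_int (m0 := m0) (P := P) (integrable_const (1 : ℝ)) hA
    simpa using this
  have hIY : Integrable (fun ω => A.indicator (fun _ => (1 : ℝ)) ω * Y ω) P :=
    psiMix_ind_int (m0 := m0) hYi hA
  have hgm : StronglyMeasurable[𝔽] g := stronglyMeasurable_condExp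
  have hmul : P[(fun ω => Y ω * A.indicator (fun _ => (1 : ℝ)) ω)|𝔽]
      =ᵐ[P] fun ω => Y ω * g ω := by
    have := condExp_mul_of_stronglyMeasurable_left (μ := P) (m := 𝔽) hY.stronglyMeasurable
      (f := Y) (g := A.indicator (fun _ => (1 : ℝ)))
      (by simpa [mul_comm, Pi.mul_def] using hIY) h1i
    exact this
  have hstep : (∫ ω, A.indicator (fun _ => (1 : ℝ)) ω * Y ω ∂P) = ∫ ω, Y ω * g ω ∂P := by
    have h0 : (∫ ω, A.indicator (fun _ => (1 : ℝ)) ω * Y ω ∂P)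
        = ∫ ω, Y ω * A.indicator (fun _ => (1 : ℝ)) ω ∂P := by
      simp [mul_comm]
    rw [h0, ← integral_condExp h𝔽]
    exact integral_congr_ae hmul
  have hcnn : 0 ≤ c := ENNReal.toReal_nonneg
  have hIYgc : Integrable (fun ω => Y ω * (g ω - c)) P := by
    refine Integrable.mono' ((hYi.abs.const_mul (ψ * c))) ?_ ?_
    · exact (hYm0.mul (((hgm.mono h𝔽).measurable.sub measurable_const))).aestronglyMeasurable
    · filter_upwards [hbd] with ω hω
      rw [Real.norm_eq_abs, abs_mul]
      calc |Y ω| * |g ω - c| ≤ |Y ω| * (ψ * c) :=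
            mul_le_mul_of_nonneg_left hω (abs_nonneg _)
        _ = ψ * c * |Y ω| := by ring
  have hsplit : (∫ ω, Y ω * g ω ∂P) = (∫ ω, Y ω * (g ω - c) ∂P) + c * ∫ ω, Y ω ∂P := by
    have h1 : (fun ω => Y ω * g ω) = fun ω => Y ω * (g ω - c) + c * Y ω := by
      funext ω; ring
    rw [h1, integral_add hIYgc (hYi.const_mul c), integral_const_mul]
  rw [hstep, hsplit]
  have habs : Integrable (fun ω => |Y ω| * |g ω - c|) P := by
    simpa [abs_mul] using hIYgc.abs
  have hfin : |(∫ ω, Y ω * (g ω - c) ∂P)| ≤ ψ * c * ∫ ω, |Y ω| ∂P := by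
    calc |(∫ ω, Y ω * (g ω - c) ∂P)| ≤ ∫ ω, |Y ω| * |g ω - c| ∂P := by
          simpa [Real.norm_eq_abs, abs_mul] using
            norm_integral_le_integral_norm (μ := P) (fun ω => Y ω * (g ω - c))
      _ ≤ ∫ ω, ψ * c * |Y ω| ∂P := by
          refine integral_mono_ae habs ((hYi.abs.const_mul (ψ * c))) ?_
          filter_upwards [hbd] with ω hω
          calc |Y ω| * |g ω - c| ≤ |Y ω| * (ψ * c) :=
                mul_le_mul_of_nonneg_left hω (abs_nonneg _)
            _ = ψ * c * |Y ω| := by ring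
      _ = ψ * c * ∫ ω, |Y ω| ∂P := integral_const_mul _ _
  simpa using hfin

lemma psiMix_simple {Ω : Type*} [m0 : MeasurableSpace Ω] (P : Measure Ω)
    [IsProbabilityMeasure P] (𝔽 𝔾 : MeasurableSpace Ω) (h𝔽 : 𝔽 ≤ m0) (h𝔾 : 𝔾 ≤ m0)
    (ψ : ℝ) (hψ : 0 ≤ ψ)
    (hmix : ∀ A : Set Ω, MeasurableSet[𝔾] A →
      ∀ᵐ ω ∂P,
        |(P[A.indicator (fun _ => (1 : ℝ))|𝔽]) ω - (P A).toReal| ≤ ψ * (P A).toReal)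
    {Y : Ω → ℝ} (hY : Measurable[𝔽] Y) (hYi : Integrable Y P)
    (f : @SimpleFunc Ω 𝔾 ℝ) :
    |(∫ ω, f ω * Y ω ∂P) - (∫ ω, f ω ∂P) * ∫ ω, Y ω ∂P|
      ≤ ψ * (∫ ω, |f ω| ∂P) * ∫ ω, |Y ω| ∂P := by
  set A : ℝ → Set Ω := fun x => f ⁻¹' {x} with hA
  have hAm : ∀ x, MeasurableSet[m0] (A x) := fun x => h𝔾 _ (f.measurableSet_fiber x)
  have hIxY : ∀ x : ℝ, Integrable (fun ω => (A x).indicator (fun _ => (1 : ℝ)) ω * Y ω) P :=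
    fun x => psiMix_ind_int (m0 := m0) hYi (hAm x)
  have hIx : ∀ x : ℝ, Integrable ((A x).indicator (fun _ => (1 : ℝ))) P := by
    intro x
    have := psiMix_ind_int (m0 := m0) (P := P) (integrable_const (1 : ℝ)) (hAm x)
    simpa using this
  set c : ℝ → ℝ := fun x => (P (A x)).toReal with hc
  have hindint : ∀ x : ℝ, (∫ ω, (A x).indicator (fun _ => (1 : ℝ)) ω ∂P) = c x := by
    intro x
    have := psiMix_int_ind_const (m0 := m0) (P := P) (hAm x)
    simpa using this
  have hfY : (∫ ω, f ω * Y ω ∂P)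
      = ∑ x ∈ f.range, x * ∫ ω, (A x).indicator (fun _ => (1 : ℝ)) ω * Y ω ∂P := by
    have h1 : (∫ ω, f ω * Y ω ∂P)
        = ∫ ω, ∑ x ∈ f.range, x * ((A x).indicator (fun _ => (1 : ℝ)) ω * Y ω) ∂P := by
      refine integral_congr_ae (Filter.Eventually.of_forall fun ω => ?_)
      show f ω * Y ω = _
      have h := psiMix_simpleFunc_rep f id ω
      simp only [id_eq] at h
      rw [← h, Finset.sum_mul]
      simp [mul_assoc, hA]
    rw [h1, integral_finset_sum _ (fun x _ => (hIxY x).const_mul x)]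
    exact Finset.sum_congr rfl fun x _ => integral_const_mul x _
  have hf : (∫ ω, f ω ∂P) = ∑ x ∈ f.range, x * c x := by
    have h1 : (∫ ω, f ω ∂P)
        = ∫ ω, ∑ x ∈ f.range, x * (A x).indicator (fun _ => (1 : ℝ)) ω ∂P := by
      refine integral_congr_ae (Filter.Eventually.of_forall fun ω => ?_)
      show f ω = _
      have h := psiMix_simpleFunc_rep f id ω
      simp only [id_eq] at h
      rw [← h]
    rw [h1, integral_finset_sum _ (fun x _ => (hIx x).const_mul x)]
    refine Finset.sum_congr rfl fun x _ => ?_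
    rw [integral_const_mul, hindint x]
  have hfabs : (∫ ω, |f ω| ∂P) = ∑ x ∈ f.range, |x| * c x := by
    have h1 : (∫ ω, |f ω| ∂P)
        = ∫ ω, ∑ x ∈ f.range, |x| * (A x).indicator (fun _ => (1 : ℝ)) ω ∂P := by
      refine integral_congr_ae (Filter.Eventually.of_forall fun ω => ?_)
      show |f ω| = _
      have h := psiMix_simpleFunc_rep f abs ω
      rw [show |f ω| = abs (f ω) from rfl, ← h]
    rw [h1, integral_finset_sum _ (fun x _ => (hIx x).const_mul |x|)]
    refine Finset.sum_congr rfl fun x _ => ?_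
    rw [integral_const_mul, hindint x]
  rw [hfY, hf, hfabs]
  calc |(∑ x ∈ f.range, x * ∫ ω, (A x).indicator (fun _ => (1 : ℝ)) ω * Y ω ∂P)
        - (∑ x ∈ f.range, x * c x) * ∫ ω, Y ω ∂P|
      = |∑ x ∈ f.range, x * ((∫ ω, (A x).indicator (fun _ => (1 : ℝ)) ω * Y ω ∂P)
          - c x * ∫ ω, Y ω ∂P)| := by
        rw [Finset.sum_mul, ← Finset.sum_sub_distrib]
        congr 1
        exact Finset.sum_congr rfl fun x _ => by ring
    _ ≤ ∑ x ∈ f.range, |x * ((∫ ω, (A x).indicator (fun _ => (1 : ℝ)) ω * Y ω ∂P)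
          - c x * ∫ ω, Y ω ∂P)| := Finset.abs_sum_le_sum_abs _ _
    _ ≤ ∑ x ∈ f.range, |x| * (ψ * c x * ∫ ω, |Y ω| ∂P) := by
        refine Finset.sum_le_sum fun x _ => ?_
        rw [abs_mul]
        exact mul_le_mul_of_nonneg_left
          (psiMix_indicator (m0 := m0) P 𝔽 h𝔽 ψ hY hYi (hAm x) (hmix (A x) (f.measurableSet_fiber x)))
          (abs_nonneg x)
    _ = ψ * (∑ x ∈ f.range, |x| * c x) * ∫ ω, |Y ω| ∂P := by
        rw [Finset.mul_sum, Finset.sum_mul]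
        exact Finset.sum_congr rfl fun x _ => by ring

lemma psiMix_abs_integral_le_sqrt {Ω : Type*} [m0 : MeasurableSpace Ω] {P : Measure Ω}
    [IsProbabilityMeasure P] {X : Ω → ℝ} (hX2 : MemLp X 2 P) :
    (∫ ω, |X ω| ∂P) ≤ Real.sqrt (∫ ω, (X ω) ^ 2 ∂P) := by
  have hconj : (2 : ℝ).HolderConjugate 2 := Real.HolderConjugate.two_two
  have h2 : (ENNReal.ofReal 2) = 2 := by
    rw [ENNReal.ofReal_ofNat]
  have habs : MemLp (fun ω => |X ω|) (ENNReal.ofReal 2) P := by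
    rw [h2]
    simpa [Real.norm_eq_abs] using hX2.norm
  have hone : MemLp (fun _ : Ω => (1 : ℝ)) (ENNReal.ofReal 2) P := memLp_const 1
  have key := integral_mul_le_Lp_mul_Lq_of_nonneg (μ := P) hconj
    (Filter.Eventually.of_forall fun ω => abs_nonneg (X ω))
    (Filter.Eventually.of_forall fun _ => zero_le_one) habs hone
  have e1 : (∫ ω, |X ω| * 1 ∂P) = ∫ ω, |X ω| ∂P := by simp
  have e2 : (∫ ω, |X ω| ^ (2 : ℝ) ∂P) = ∫ ω, (X ω) ^ 2 ∂P := by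
    refine integral_congr_ae (Filter.Eventually.of_forall fun ω => ?_)
    show |X ω| ^ (2 : ℝ) = X ω ^ 2
    rw [show (2 : ℝ) = ((2 : ℕ) : ℝ) by norm_num, Real.rpow_natCast, sq_abs]
  have e3 : (∫ _ : Ω, (1 : ℝ) ^ (2 : ℝ) ∂P) = 1 := by simp
  rw [e1, e2, e3] at key
  calc (∫ ω, |X ω| ∂P) ≤ (∫ ω, (X ω) ^ 2 ∂P) ^ (1 / (2 : ℝ)) * (1 : ℝ) ^ (1 / (2 : ℝ)) := key
    _ = Real.sqrt (∫ ω, (X ω) ^ 2 ∂P) := by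
        rw [Real.one_rpow, mul_one, Real.sqrt_eq_rpow]

/-- Covariance inequality under ψ-mixing (Doukhan 1994, Theorem 3): if every event
`A` in `𝔾` satisfies `|P(A | 𝔽) - P(A)| ≤ ψ P(A)` a.s., `X` is `𝔾`-measurable and
`Y` is `𝔽`-measurable, then `|E[XY] - E X E Y| ≤ ψ E|X| E|Y|`; moreover if `X` and
`Y` are square-integrable, `|E[XY] - E X E Y| ≤ ψ √(E X²) √(E Y²)`. -/
theorem psi_mixing_covariance_inequality
    {Ω : Type*} [m0 : MeasurableSpace Ω] (P : Measure Ω) [IsProbabilityMeasure P]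
    (𝔽 𝔾 : MeasurableSpace Ω) (h𝔽 : 𝔽 ≤ m0) (h𝔾 : 𝔾 ≤ m0)
    (ψ : ℝ) (hψ : 0 ≤ ψ)
    (hmix : ∀ A : Set Ω, MeasurableSet[𝔾] A →
      ∀ᵐ ω ∂P,
        |(P[A.indicator (fun _ => (1 : ℝ))|𝔽]) ω - (P A).toReal| ≤ ψ * (P A).toReal)
    (X Y : Ω → ℝ) (hX : Measurable[𝔾] X) (hY : Measurable[𝔽] Y)
    (hXi : Integrable X P) (hYi : Integrable Y P)
    (hXY : Integrable (fun ω => X ω * Y ω) P) :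
    |(∫ ω, X ω * Y ω ∂P) - (∫ ω, X ω ∂P) * ∫ ω, Y ω ∂P| ≤
        ψ * (∫ ω, |X ω| ∂P) * ∫ ω, |Y ω| ∂P ∧
      (MemLp X 2 P → MemLp Y 2 P →
        |(∫ ω, X ω * Y ω ∂P) - (∫ ω, X ω ∂P) * ∫ ω, Y ω ∂P| ≤
          ψ * Real.sqrt (∫ ω, (X ω) ^ 2 ∂P) * Real.sqrt (∫ ω, (Y ω) ^ 2 ∂P)) := by
  have hXm0 : Measurable[m0] X := hX.mono h𝔾 le_rfl
  have hYm0 : Measurable[m0] Y := hY.mono h𝔽 le_rfl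
  set fn : ℕ → @SimpleFunc Ω 𝔾 ℝ :=
    fun n => SimpleFunc.approxOn X hX Set.univ 0 (Set.mem_univ 0) n with hfn
  have hbdd : ∀ n ω, |fn n ω| ≤ 2 * |X ω| := by
    intro n ω
    have := SimpleFunc.norm_approxOn_zero_le hX (Set.mem_univ 0) ω n
    rw [Real.norm_eq_abs, Real.norm_eq_abs] at this
    linarith
  have htend : ∀ ω, Filter.Tendsto (fun n => fn n ω) Filter.atTop (nhds (X ω)) :=
    fun ω => SimpleFunc.tendsto_approxOn hX (Set.mem_univ 0) (by simp)
  have hfnm : ∀ n, Measurable[m0] (fn n) := fun n => ((fn n).measurable).mono h𝔾 le_rfl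
  have tendsto1 : Filter.Tendsto (fun n => ∫ ω, fn n ω * Y ω ∂P) Filter.atTop
      (nhds (∫ ω, X ω * Y ω ∂P)) := by
    refine tendsto_integral_of_dominated_convergence (fun ω => 2 * |X ω * Y ω|)
      (fun n => ((hfnm n).mul hYm0).aestronglyMeasurable) (hXY.abs.const_mul 2)
      (fun n => Filter.Eventually.of_forall fun ω => ?_)
      (Filter.Eventually.of_forall fun ω => (htend ω).mul tendsto_const_nhds)
    show ‖fn n ω * Y ω‖ ≤ 2 * |X ω * Y ω|
    rw [Real.norm_eq_abs, abs_mul, abs_mul]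
    calc |fn n ω| * |Y ω| ≤ 2 * |X ω| * |Y ω| :=
          mul_le_mul_of_nonneg_right (hbdd n ω) (abs_nonneg _)
      _ = 2 * (|X ω| * |Y ω|) := by ring
  have tendsto2 : Filter.Tendsto (fun n => ∫ ω, fn n ω ∂P) Filter.atTop
      (nhds (∫ ω, X ω ∂P)) := by
    refine tendsto_integral_of_dominated_convergence (fun ω => 2 * |X ω|)
      (fun n => (hfnm n).aestronglyMeasurable) (hXi.abs.const_mul 2)
      (fun n => Filter.Eventually.of_forall fun ω => ?_)
      (Filter.Eventually.of_forall fun ω => htend ω)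
    show ‖fn n ω‖ ≤ 2 * |X ω|
    rw [Real.norm_eq_abs]; exact hbdd n ω
  have tendsto3 : Filter.Tendsto (fun n => ∫ ω, |fn n ω| ∂P) Filter.atTop
      (nhds (∫ ω, |X ω| ∂P)) := by
    refine tendsto_integral_of_dominated_convergence (fun ω => 2 * |X ω|)
      (fun n => (measurable_abs.comp (hfnm n)).aestronglyMeasurable) (hXi.abs.const_mul 2)
      (fun n => Filter.Eventually.of_forall fun ω => ?_)
      (Filter.Eventually.of_forall fun ω => (htend ω).abs)
    show ‖|fn n ω|‖ ≤ 2 * |X ω|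
    rw [Real.norm_eq_abs, abs_abs]; exact hbdd n ω
  have hn : ∀ n, |(∫ ω, fn n ω * Y ω ∂P) - (∫ ω, fn n ω ∂P) * ∫ ω, Y ω ∂P|
      ≤ ψ * (∫ ω, |fn n ω| ∂P) * ∫ ω, |Y ω| ∂P :=
    fun n => @psiMix_simple Ω m0 P _ 𝔽 𝔾 h𝔽 h𝔾 ψ hψ hmix Y hY hYi (fn n)
  have part1 : |(∫ ω, X ω * Y ω ∂P) - (∫ ω, X ω ∂P) * ∫ ω, Y ω ∂P| ≤
      ψ * (∫ ω, |X ω| ∂P) * ∫ ω, |Y ω| ∂P :=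
    le_of_tendsto_of_tendsto'
      ((tendsto1.sub (tendsto2.mul tendsto_const_nhds)).abs)
      ((tendsto_const_nhds.mul tendsto3).mul tendsto_const_nhds) hn
  refine ⟨part1, fun hX2 hY2 => ?_⟩
  have h1 : (∫ ω, |X ω| ∂P) ≤ Real.sqrt (∫ ω, (X ω) ^ 2 ∂P) :=
    psiMix_abs_integral_le_sqrt (m0 := m0) hX2
  have h2 : (∫ ω, |Y ω| ∂P) ≤ Real.sqrt (∫ ω, (Y ω) ^ 2 ∂P) :=
    psiMix_abs_integral_le_sqrt (m0 := m0) hY2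
  calc |(∫ ω, X ω * Y ω ∂P) - (∫ ω, X ω ∂P) * ∫ ω, Y ω ∂P|
      ≤ ψ * (∫ ω, |X ω| ∂P) * ∫ ω, |Y ω| ∂P := part1
    _ ≤ ψ * Real.sqrt (∫ ω, (X ω) ^ 2 ∂P) * Real.sqrt (∫ ω, (Y ω) ^ 2 ∂P) := by
        refine mul_le_mul (mul_le_mul_of_nonneg_left h1 hψ) h2
          (integral_nonneg fun ω => abs_nonneg _)
          (mul_nonneg hψ (Real.sqrt_nonneg _))
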